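/- arXiv:1209.3236 — 4 statements merged into one kernel-verified Lean document; each statement's English description precedes it below -/
import Mathlib

section
/- Let G be a connected finite simple graph and let k be an integer with χ(G) ≤ k ≤ Σ(G), where χ(G) is the chromatic number and Σ(G) is the folding number of G. Then there is a folding of G onto the complete graph K_k. -/
/-- A simple fold of `G` onto `H` via the identification map `f`:
two vertices `x ≠ y` at distance exactly two are identified, all other
vertices are kept distinct, and `H` is the resulting quotient graph. -/
def IsSimpleFold {V W : Type} (G : SimpleGraph V) (H : SimpleGraph W) (f : V → W) : Prop :=
  Function.Surjective f ∧
  (∃ x y : V, x ≠ y ∧ G.dist x y = 2 ∧ f x = f y ∧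
    ∀ u v : V, u ≠ v → f u = f v → (u = x ∧ v = y) ∨ (u = y ∧ v = x)) ∧
  ∀ a b : W, H.Adj a b ↔ ∃ u v : V, G.Adj u v ∧ f u = a ∧ f v = b

/-- `IsFolding G H f` : `H` is obtained from `G` by a (possibly empty)
sequence of simple folds whose composite identification map is `f`. -/
inductive IsFolding : ∀ {V W : Type}, SimpleGraph V → SimpleGraph W → (V → W) → Prop
  | refl {V : Type} (G : SimpleGraph V) : IsFolding G G id
  | step {V W U : Type} {G : SimpleGraph V} {H : SimpleGraph W} {K : SimpleGraph U}
      {f : V → W} {g : W → U} :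
      IsSimpleFold G H f → IsFolding H K g → IsFolding G K (g ∘ f)

/-- `G` folds onto `H`. -/
def FoldsOnto {V W : Type} (G : SimpleGraph V) (H : SimpleGraph W) : Prop :=
  ∃ f : V → W, IsFolding G H f

/-- The folding number `Σ(G)`: the largest `s` such that `G` folds onto `K_s`. -/
noncomputable def foldingNumber {V : Type} (G : SimpleGraph V) : ℕ :=
  sSup {s : ℕ | FoldsOnto G (SimpleGraph.completeGraph (Fin s))}

/-- A complete coloring of `G` with exactly `s` colors. -/
def IsCompleteColoring {V : Type} (G : SimpleGraph V) {s : ℕ} (c : V → Fin s) : Prop :=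
  (∀ u v : V, G.Adj u v → c u ≠ c v) ∧
  Function.Surjective c ∧
  ∀ a b : Fin s, a ≠ b → ∃ u v : V, G.Adj u v ∧ c u = a ∧ c v = b

/-- The achromatic number `Ψ(G)`. -/
noncomputable def achromaticNumber {V : Type} (G : SimpleGraph V) : ℕ :=
  sSup {s : ℕ | ∃ c : V → Fin s, IsCompleteColoring G c}

namespace AuxFold

open Function SimpleGraph

variable {V W : Type} {G : SimpleGraph V} {H : SimpleGraph W} {f : V → W}

lemma card_subtype_ne [Finite V] (y : V) :
    Nat.card {z : V // z ≠ y} = Nat.card V - 1 := by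
  classical
  cases nonempty_fintype V
  simp only [Nat.card_eq_fintype_card]
  have := Fintype.card_subtype_compl (fun z : V => z = y)
  simpa [Fintype.card_subtype_eq] using this

lemma card_lt_of_glue [Finite V] (f : V → W) (hf : Surjective f) {x y : V}
    (hxy : x ≠ y) (hfxy : f x = f y) : Nat.card W < Nat.card V := by
  classical
  have hsur : Surjective fun z : {z : V // z ≠ y} => f z.1 := by
    intro w
    obtain ⟨v, rfl⟩ := hf w
    by_cases h : v = y
    · exact ⟨⟨x, hxy⟩, by rw [h, ← hfxy]⟩
    · exact ⟨⟨v, h⟩, rfl⟩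
  have h1 := Nat.card_le_card_of_surjective _ hsur
  rw [card_subtype_ne] at h1
  have h2 : 0 < Nat.card V := Nat.card_pos_iff.2 ⟨⟨x⟩, inferInstance⟩
  omega

/-- the quotient map of a simple fold is a graph homomorphism -/
def foldHom (h : IsSimpleFold G H f) : G →g H where
  toFun := f
  map_rel' := fun {u v} huv => (h.2.2 (f u) (f v)).2 ⟨u, v, huv, rfl, rfl⟩

lemma fold_connected (h : IsSimpleFold G H f) (hG : G.Connected) : H.Connected :=
  hG.map (foldHom h) h.1

lemma fold_colorable_of (h : IsSimpleFold G H f) {m : ℕ}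
    (hm : H.Colorable m) : G.Colorable m := by
  obtain ⟨C⟩ := hm
  exact ⟨C.comp (foldHom h)⟩

lemma fold_card_lt [Finite V] (h : IsSimpleFold G H f) :
    Nat.card W < Nat.card V := by
  obtain ⟨hsurj, ⟨x, y, hxy, _, hfxy, _⟩, _⟩ := h
  exact card_lt_of_glue f hsurj hxy hfxy

lemma IsFolding_surjective_test : True := trivial

lemma fold_colorable_succ (h : IsSimpleFold G H f) {m : ℕ}
    (hm : G.Colorable m) : H.Colorable (m + 1) := by
  classical
  obtain ⟨hsurj, ⟨x, y, hxy, hdist, hfxy, huniq⟩, hiff⟩ := h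
  obtain ⟨C⟩ := hm
  have : Nonempty V := ⟨x⟩
  let c : V → Fin m := fun v => C v
  have hfinv : ∀ a : W, f (Function.invFun f a) = a := fun a =>
    Function.invFun_eq (hsurj a)
  refine ⟨Coloring.mk
    (fun a => if a = f x then Fin.last m else (c (Function.invFun f a)).castSucc) ?_⟩
  intro a b hab
  obtain ⟨u, v, huv, hu, hv⟩ := (hiff a b).1 hab
  have hne : a ≠ b := hab.ne
  by_cases ha : a = f x <;> by_cases hb : b = f x
  · exact absurd (ha.trans hb.symm) hne
  · simp only [ha, if_pos, if_neg hb]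
    exact (Fin.castSucc_lt_last _).ne'
  · simp only [if_neg ha, if_pos hb]
    exact (Fin.castSucc_lt_last _).ne
  · simp only [if_neg ha, if_neg hb]
    have keyu : Function.invFun f a = u := by
      by_contra hne'
      have := huniq _ _ hne' ((hfinv a).trans hu.symm)
      rcases this with ⟨h1, h2⟩ | ⟨h1, h2⟩
      · exact ha (by rw [← hfinv a, h1])
      · exact ha (by rw [← hfinv a, h1, ← hfxy])
    have keyv : Function.invFun f b = v := by
      by_contra hne'
      have := huniq _ _ hne' ((hfinv b).trans hv.symm)
      rcases this with ⟨h1, h2⟩ | ⟨h1, h2⟩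
      · exact hb (by rw [← hfinv b, h1])
      · exact hb (by rw [← hfinv b, h1, ← hfxy])
    rw [keyu, keyv]
    intro e
    exact C.valid huv (Fin.castSucc_injective _ e)

end AuxFold

namespace AuxFold
open Function SimpleGraph

variable {V W : Type} {G : SimpleGraph V}

/-- Every coloring with a minimal number of colors is surjective and complete. -/
lemma min_coloring_complete {k : ℕ} (hmin : ∀ m, m < k → ¬ G.Colorable m)
    (c : V → Fin k) (hc : ∀ u v : V, G.Adj u v → c u ≠ c v) :
    Function.Surjective c ∧
      ∀ a b : Fin k, a ≠ b → ∃ u v : V, G.Adj u v ∧ c u = a ∧ c v = b := by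
  classical
  constructor
  · intro b
    by_contra hb
    push_neg at hb
    have hk : 0 < k := Fin.pos b
    refine hmin (k - 1) (by omega) ?_
    have hcard : Fintype.card {i : Fin k // i ≠ b} = k - 1 := by
      have := Fintype.card_subtype_compl (fun i : Fin k => i = b)
      simpa [Fintype.card_subtype_eq] using this
    have : G.Colorable (Fintype.card {i : Fin k // i ≠ b}) := by
      refine Coloring.colorable (Coloring.mk (fun v => ⟨c v, hb v⟩) ?_)
      intro u v huv e
      exact hc u v huv (congrArg Subtype.val e)
    rwa [hcard] at this
  · intro a b hab
    by_contra hex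
    push_neg at hex
    have hk : 0 < k := Fin.pos b
    refine hmin (k - 1) (by omega) ?_
    have hcard : Fintype.card {i : Fin k // i ≠ b} = k - 1 := by
      have := Fintype.card_subtype_compl (fun i : Fin k => i = b)
      simpa [Fintype.card_subtype_eq] using this
    have : G.Colorable (Fintype.card {i : Fin k // i ≠ b}) := by
      refine Coloring.colorable (Coloring.mk
        (fun v => if h : c v = b then ⟨a, hab⟩ else ⟨c v, h⟩) ?_)
      intro u v huv e
      by_cases hu : c u = b <;> by_cases hv : c v = b
      · exact hc u v huv (hu.trans hv.symm)
      · simp only [dif_pos hu, dif_neg hv, Subtype.mk.injEq] at e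
        exact hex v u huv.symm e.symm hu
      · simp only [dif_neg hu, dif_pos hv, Subtype.mk.injEq] at e
        exact hex u v huv e hv
      · simp only [dif_neg hu, dif_neg hv, Subtype.mk.injEq] at e
        exact hc u v huv e
    rwa [hcard] at this

/-- Key lemma: if `G` is connected, `k`-colorable and not complete, then some proper
`k`-coloring has two vertices of the same color at distance exactly 2. -/
lemma exists_good_coloring [Finite V] (hG : G.Connected) {k : ℕ}
    (hcol : G.Colorable k) (hnc : ∃ x y : V, x ≠ y ∧ ¬ G.Adj x y) :
    ∃ (c : V → Fin k) (x y : V), (∀ u v : V, G.Adj u v → c u ≠ c v) ∧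
      x ≠ y ∧ c x = c y ∧ G.dist x y = 2 := by
  classical
  obtain ⟨C⟩ := hcol
  -- first, get a non-injective proper coloring
  obtain ⟨c₁, hc₁, u₁, v₁, hne₁, heq₁⟩ :
      ∃ c₁ : V → Fin k, (∀ u v : V, G.Adj u v → c₁ u ≠ c₁ v) ∧
        ∃ u v : V, u ≠ v ∧ c₁ u = c₁ v := by
    classical
    by_cases hinj : Function.Injective (fun t => (C t : Fin k))
    · obtain ⟨x₀, y₀, hxy₀, hnadj₀⟩ := hnc
      refine ⟨fun t => if t = y₀ then C x₀ else C t, ?_, x₀, y₀, hxy₀, ?_⟩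
      · intro a b hab
        by_cases ha : a = y₀ <;> by_cases hb : b = y₀
        · exact absurd (ha.trans hb.symm) hab.ne
        · simp only [if_pos ha, if_neg hb]
          intro e
          have hbx : x₀ = b := hinj e
          refine hnadj₀ ?_
          rw [hbx, ← ha]
          exact hab.symm
        · simp only [if_pos hb, if_neg ha]
          intro e
          have hax : a = x₀ := hinj e
          refine hnadj₀ ?_
          rw [← hax, ← hb]
          exact hab
        · simp only [if_neg ha, if_neg hb]
          exact C.valid hab
      · simp [hxy₀]
    · rw [Function.not_injective_iff] at hinj
      obtain ⟨a₀, b₀, he, hne⟩ := hinj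
      exact ⟨fun v => C v, fun a b hab => C.valid hab, a₀, b₀, hne, he⟩
  -- the set of distances realized by monochromatic pairs
  set S : Set ℕ := {d : ℕ | ∃ c : V → Fin k, (∀ u v : V, G.Adj u v → c u ≠ c v) ∧
      ∃ u v : V, u ≠ v ∧ c u = c v ∧ G.dist u v = d} with hS
  have hSne : S.Nonempty := ⟨G.dist u₁ v₁, c₁, hc₁, u₁, v₁, hne₁, heq₁, rfl⟩
  obtain ⟨c, hc, u, v, huv, hcc, hdist⟩ := Nat.sInf_mem hSne
  have hminS : ∀ (c' : V → Fin k), (∀ a b : V, G.Adj a b → c' a ≠ c' b) →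
      ∀ z z' : V, z ≠ z' → c' z = c' z' → sInf S ≤ G.dist z z' :=
    fun c' hc' z z' h1 h2 => Nat.sInf_le ⟨c', hc', z, z', h1, h2, rfl⟩
  have hd0 : sInf S ≠ 0 := by
    intro h0
    rw [h0] at hdist
    exact huv ((hG.preconnected u v).dist_eq_zero_iff.mp hdist)
  have hd1 : sInf S ≠ 1 := by
    intro h1
    rw [h1] at hdist
    exact hc u v (SimpleGraph.dist_eq_one_iff_adj.mp hdist) hcc
  rcases lt_or_ge (sInf S) 3 with h3 | h3
  · have : sInf S = 2 := by omega
    rw [this] at hdist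
    exact ⟨c, u, v, hc, huv, hcc, hdist⟩
  · exfalso
    -- take a shortest walk from u to v
    obtain ⟨p, hp⟩ := (hG.preconnected u v).exists_walk_length_eq_dist
    cases p with
    | nil => rw [hdist] at hp; simp only [Walk.length_nil] at hp; omega
    | @cons _ w _ h q =>
      -- h : G.Adj u w, q : G.Walk w v
      have hql : q.length = sInf S - 1 := by
        have : q.length + 1 = sInf S := by simpa [hdist] using hp
        omega
      have hwv : w ≠ v := by
        intro hwv'
        have h1 : G.dist u w ≤ 1 := by
          simpa using G.dist_le (Walk.cons h Walk.nil)
        rw [hwv', hdist] at h1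
        omega
      have huw : u ≠ w := h.ne
      have hvu : v ≠ u := huv.symm
      have hcuw : c u ≠ c w := hc u w h
      -- neighbors of u colored like w must be w; neighbors of w colored like u must be u
      have hii : ∀ z : V, G.Adj u z → c z = c w → z = w := by
        intro z hz he
        by_contra hzw
        have hd : G.dist z w ≤ 2 := by
          simpa using G.dist_le (Walk.cons hz.symm (Walk.cons h Walk.nil))
        have := hminS c hc z w hzw he
        omega
      have hiii : ∀ z : V, G.Adj w z → c z = c u → z = u := by
        intro z hz he
        by_contra hzu
        have hd : G.dist z u ≤ 2 := by
          simpa using G.dist_le (Walk.cons hz.symm (Walk.cons h.symm Walk.nil))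
        have := hminS c hc z u hzu he
        omega
      -- swap the colors of u and w
      set c'' : V → Fin k := fun t => if t = u then c w else if t = w then c u else c t
        with hc''
      have hproper : ∀ a b : V, G.Adj a b → c'' a ≠ c'' b := by
        intro a b hab
        have hne' : a ≠ b := hab.ne
        simp only [hc'']
        by_cases hau : a = u <;> by_cases hbu : b = u
        · exact absurd (hau.trans hbu.symm) hne'
        · by_cases hbw : b = w
          · simp only [if_pos hau, if_neg hbu, if_pos hbw]
            exact hcuw.symm
          · simp only [if_pos hau, if_neg hbu, if_neg hbw]
            intro e
            exact hbw (hii b (by rw [← hau]; exact hab) e.symm)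
        · by_cases haw : a = w
          · simp only [if_neg hau, if_pos haw, if_pos hbu]
            exact hcuw
          · simp only [if_neg hau, if_neg haw, if_pos hbu]
            intro e
            exact haw (hii a (by rw [← hbu]; exact hab.symm) e)
        · by_cases haw : a = w <;> by_cases hbw : b = w
          · exact absurd (haw.trans hbw.symm) hne'
          · simp only [if_neg hau, if_pos haw, if_neg hbu, if_neg hbw]
            intro e
            exact hbu (hiii b (by rw [← haw]; exact hab) e.symm)
          · simp only [if_neg hau, if_neg haw, if_neg hbu, if_pos hbw]
            intro e
            exact hau (hiii a (by rw [← hbw]; exact hab.symm) e)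
          · simp only [if_neg hau, if_neg haw, if_neg hbu, if_neg hbw]
            exact hc a b hab
      have hwv' : c'' w = c'' v := by
        have hvw : v ≠ w := hwv.symm
        simp only [hc'', if_neg huw.symm, if_pos rfl, if_neg hvu, if_neg hvw]
        exact hcc
      have hle : G.dist w v ≤ sInf S - 1 := by
        have := G.dist_le q
        omega
      have := hminS c'' hproper w v hwv hwv'
      omega

end AuxFold

namespace AuxFold
open Function SimpleGraph

variable {V : Type}

lemma card_subtype_ne_two [Finite V] {a b : V} (hab : a ≠ b) :
    Nat.card {z : V // z ≠ a ∧ z ≠ b} = Nat.card V - 2 := by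
  classical
  cases nonempty_fintype V
  simp only [Nat.card_eq_fintype_card]
  rw [Fintype.card_subtype]
  have heq : Finset.univ.filter (fun z : V => z ≠ a ∧ z ≠ b) = Finset.univ \ {a, b} := by
    ext z
    simp [not_or]
  rw [heq, Finset.card_sdiff_of_subset (Finset.subset_univ _), Finset.card_univ, Finset.card_pair hab]

lemma foldsOnto_of_critical :
    ∀ (n : ℕ) (V : Type) (G : SimpleGraph V), Finite V → Nat.card V ≤ n → G.Connected →
      ∀ k : ℕ, G.Colorable k → (∀ m, m < k → ¬G.Colorable m) →
      (∃ x y : V, x ≠ y ∧ ¬G.Adj x y) → FoldsOnto G (completeGraph (Fin k)) := by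
  intro n
  induction n with
  | zero =>
    intro V G hfin hcard hG k _ _ _
    exfalso
    have : Nonempty V := hG.nonempty
    have := Nat.card_pos (α := V)
    omega
  | succ n ih =>
    intro V G hfin hcard hG k hcol hmin hnc
    classical
    obtain ⟨c, x, y, hc, hxy, hcxy, hdist⟩ := exists_good_coloring hG hcol hnc
    obtain ⟨hsurj, hcomp⟩ := min_coloring_complete hmin c hc
    have hnadj : ¬ G.Adj x y := by
      intro h
      have := SimpleGraph.dist_eq_one_iff_adj.mpr h
      omega
    have hk1 : 0 < k := Fin.pos (c x)
    have hklt : k < Nat.card V := by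
      have h1 := card_lt_of_glue c hsurj hxy hcxy
      have h6 : Nat.card (Fin k) = k := by simp
      rwa [h6] at h1
    rcases eq_or_lt_of_le (show k + 1 ≤ Nat.card V by omega) with hm | hm
    · -- |V| = k + 1 : a single fold onto the complete graph
      have hinj2 : ∀ u v : V, u ≠ y → v ≠ y → u ≠ v → c u ≠ c v := by
        intro u' v' hu' hv' hne heq
        have hsurT : ∀ a : Fin k, ∃ z : V, (z ≠ v' ∧ z ≠ y) ∧ c z = a := by
          intro a
          obtain ⟨z, hz⟩ := hsurj a
          by_cases h1 : z = v'
          · exact ⟨u', ⟨hne, hu'⟩, by rw [heq, ← h1, hz]⟩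
          · by_cases h2 : z = y
            · by_cases h3 : x = v'
              · refine ⟨u', ⟨hne, hu'⟩, ?_⟩
                calc c u' = c v' := heq
                  _ = c x := by rw [h3]
                  _ = c y := hcxy
                  _ = c z := by rw [h2]
                  _ = a := hz
              · exact ⟨x, ⟨h3, hxy⟩, by rw [hcxy, ← h2, hz]⟩
            · exact ⟨z, ⟨h1, h2⟩, hz⟩
        have hsurT' : Function.Surjective
            (fun z : {z : V // z ≠ v' ∧ z ≠ y} => c z.1) := by
          intro a
          obtain ⟨z, hz1, hz2⟩ := hsurT a
          exact ⟨⟨z, hz1⟩, hz2⟩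
        have hle := Nat.card_le_card_of_surjective _ hsurT'
        have h6 : Nat.card (Fin k) = k := by simp
        rw [card_subtype_ne_two hv', h6] at hle
        omega
      have key : ∀ u v : V, u ≠ v → c u = c v → (u = x ∧ v = y) ∨ (u = y ∧ v = x) := by
        intro u v hne heq
        by_cases hu : u = y
        · right
          have hvy : v ≠ y := by
            rw [← hu]
            exact fun e => hne e.symm
          refine ⟨hu, ?_⟩
          by_contra hvx
          exact hinj2 v x hvy hxy hvx (by rw [← heq, hu, ← hcxy])
        · by_cases hv : v = y
          · left
            refine ⟨?_, hv⟩
            by_contra hux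
            exact hinj2 u x hu hxy hux (by rw [heq, hv, ← hcxy])
          · exact absurd heq (hinj2 u v hu hv hne)
      refine ⟨id ∘ c, IsFolding.step ⟨hsurj, ⟨x, y, hxy, hdist, hcxy, key⟩, ?_⟩
        (IsFolding.refl _)⟩
      intro a b
      constructor
      · intro hab
        exact hcomp a b hab.ne
      · rintro ⟨u, v, huv, rfl, rfl⟩
        exact hc u v huv
    · -- |V| > k + 1 : fold x and y together and recurse
      set f : V → {z : V // z ≠ y} := fun z => if h : z = y then ⟨x, hxy⟩ else ⟨z, h⟩
        with hf
      have hfy : f y = ⟨x, hxy⟩ := by simp [hf]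
      have hfx : f x = ⟨x, hxy⟩ := by simp [hf, hxy]
      have hfne : ∀ z : V, (hz : z ≠ y) → f z = ⟨z, hz⟩ := by
        intro z hz
        simp [hf, hz]
      have hfsurj : Function.Surjective f := by
        intro w
        exact ⟨w.1, by rw [hfne w.1 w.2]⟩
      have huniq : ∀ u v : V, u ≠ v → f u = f v →
          (u = x ∧ v = y) ∨ (u = y ∧ v = x) := by
        intro u v hne he
        by_cases hu : u = y <;> by_cases hv : v = y
        · exact absurd (hu.trans hv.symm) hne
        · rw [hu] at he ⊢
          rw [hfy, hfne v hv] at he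
          right
          exact ⟨rfl, (congrArg Subtype.val he).symm⟩
        · rw [hv] at he ⊢
          rw [hfy, hfne u hu] at he
          left
          exact ⟨congrArg Subtype.val he, rfl⟩
        · rw [hfne u hu, hfne v hv] at he
          exact absurd (congrArg Subtype.val he) hne
      set H : SimpleGraph {z : V // z ≠ y} :=
        { Adj := fun a b => a ≠ b ∧ ∃ u v : V, G.Adj u v ∧ f u = a ∧ f v = b
          symm := ⟨by
            rintro a b ⟨hne, u, v, huv, hu, hv⟩
            exact ⟨hne.symm, v, u, huv.symm, hv, hu⟩⟩
          loopless := ⟨fun a h => h.1 rfl⟩ } with hH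
      have hiff : ∀ a b : {z : V // z ≠ y},
          H.Adj a b ↔ ∃ u v : V, G.Adj u v ∧ f u = a ∧ f v = b := by
        intro a b
        constructor
        · exact fun h => h.2
        · rintro ⟨u, v, huv, hu, hv⟩
          refine ⟨?_, u, v, huv, hu, hv⟩
          rintro rfl
          have he : f u = f v := hu.trans hv.symm
          rcases huniq u v huv.ne he with ⟨h1, h2⟩ | ⟨h1, h2⟩
          · rw [h1, h2] at huv; exact hnadj huv
          · rw [h1, h2] at huv; exact hnadj huv.symm
      have hfold : IsSimpleFold G H f :=
        ⟨hfsurj, ⟨x, y, hxy, hdist, by rw [hfx, hfy], huniq⟩, hiff⟩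
      have hcf : ∀ (u : V) (a : {z : V // z ≠ y}), f u = a → c a.1 = c u := by
        intro u a hu
        by_cases h : u = y
        · rw [h] at hu
          rw [hfy] at hu
          rw [← hu]
          rw [h, ← hcxy]
        · rw [hfne u h] at hu
          rw [← hu]
      have hdproper : ∀ a b : {z : V // z ≠ y},
          H.Adj a b → c a.1 ≠ c b.1 := by
        rintro a b ⟨hne, u, v, huv, hu, hv⟩
        rw [hcf u a hu, hcf v b hv]
        exact hc u v huv
      have hHcol : H.Colorable k := ⟨Coloring.mk (fun w => c w.1) @(hdproper)⟩
      have hHmin : ∀ m, m < k → ¬H.Colorable m :=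
        fun m hm hx => hmin m hm (fold_colorable_of hfold hx)
      have hHconn : H.Connected := fold_connected hfold hG
      have hHcard : Nat.card {z : V // z ≠ y} = Nat.card V - 1 := card_subtype_ne y
      have hHnc : ∃ a b : {z : V // z ≠ y}, a ≠ b ∧ ¬H.Adj a b := by
        have hninj : ¬ Function.Injective (fun w : {z : V // z ≠ y} => c w.1) := by
          intro hinj
          have h5 := Nat.card_le_card_of_injective _ hinj
          have h6 : Nat.card (Fin k) = k := by simp
          rw [hHcard, h6] at h5
          omega
        rw [Function.not_injective_iff] at hninj
        obtain ⟨a, b, he, hab⟩ := hninj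
        exact ⟨a, b, hab, fun h => hdproper a b h he⟩
      obtain ⟨g, hg⟩ := ih _ H inferInstance (by omega) hHconn k hHcol hHmin hHnc
      exact ⟨g ∘ f, IsFolding.step hfold hg⟩

end AuxFold

namespace AuxFold
open Function SimpleGraph

lemma isFolding_surjective : ∀ {V W : Type} {G : SimpleGraph V} {H : SimpleGraph W}
    {f : V → W}, IsFolding G H f → Function.Surjective f := by
  intro V W G H f h
  induction h with
  | refl G => exact Function.surjective_id
  | step h1 _ ih => exact ih.comp h1.1

lemma interp :
    ∀ (n : ℕ) (V : Type) (G : SimpleGraph V), Finite V → Nat.card V ≤ n → G.Connected →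
      ∀ (k s : ℕ) (f : V → Fin s), IsFolding G (completeGraph (Fin s)) f →
        G.Colorable k → k ≤ s → FoldsOnto G (completeGraph (Fin k)) := by
  intro n
  induction n with
  | zero =>
    intro V G hfin hcard hG k s f _ _ _
    exfalso
    have : Nonempty V := hG.nonempty
    have := Nat.card_pos (α := V)
    omega
  | succ n ih =>
    intro V G hfin hcard hG k s f hfold hcol hks
    classical
    cases hfold with
    | refl =>
      have hsk : s ≤ k := by
        obtain ⟨C⟩ := hcol
        have hinj : Function.Injective (fun t => (C t : Fin k)) := by
          intro a b he
          by_contra hne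
          exact C.valid hne he
        have := Fintype.card_le_of_injective _ hinj
        simpa using this
      have hkseq : k = s := le_antisymm hks hsk
      subst hkseq
      exact ⟨id, IsFolding.refl _⟩
    | step h1 h2 =>
      rename_i W' HH f₁ g
      have hfin2 : Finite W' := Finite.of_surjective f₁ h1.1
      by_cases hex : ∃ m, m < k ∧ G.Colorable m
      · obtain ⟨m, hmk, hcm⟩ := hex
        have hHk : HH.Colorable k := (fold_colorable_succ h1 hcm).mono (by omega)
        have hcard2 : Nat.card W' ≤ n := by
          have := fold_card_lt h1
          omega
        obtain ⟨g', hg'⟩ := ih W' HH hfin2 hcard2 (fold_connected h1 hG) k s g h2 hHk hks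
        exact ⟨g' ∘ f₁, IsFolding.step h1 hg'⟩
      · obtain ⟨x, y, hxy, hdist, _, _⟩ := h1.2.1
        have hnadj : ¬G.Adj x y := by
          intro h
          have := SimpleGraph.dist_eq_one_iff_adj.mpr h
          omega
        exact foldsOnto_of_critical (n+1) V G hfin hcard hG k hcol
          (fun m hm hcm => hex ⟨m, hm, hcm⟩) ⟨x, y, hxy, hnadj⟩

end AuxFold

/-- Interpolation: a connected graph `G` folds onto `K_k` for every `k` with
`χ(G) ≤ k ≤ Σ(G)`. -/
theorem foldsOnto_completeGraph_of_chromaticNumber_le_le {V : Type} [Fintype V]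
    (G : SimpleGraph V) (hG : G.Connected) (k : ℕ)
    (h1 : G.chromaticNumber ≤ (k : ℕ∞)) (h2 : k ≤ foldingNumber G) :
    FoldsOnto G (SimpleGraph.completeGraph (Fin k)) := by

  classical
  have hcol : G.Colorable k := SimpleGraph.chromaticNumber_le_iff_colorable.1 h1
  rcases Nat.eq_zero_or_pos k with rfl | hk
  · exfalso
    obtain ⟨C⟩ := hcol
    have : Nonempty V := hG.nonempty
    exact (C (Classical.arbitrary V)).elim0
  · set S := {s : ℕ | FoldsOnto G (SimpleGraph.completeGraph (Fin s))} with hS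
    have hfoldeq : foldingNumber G = sSup S := rfl
    have hbdd : BddAbove S := by
      refine ⟨Nat.card V, ?_⟩
      rintro s ⟨f, hf⟩
      have hsurj := AuxFold.isFolding_surjective hf
      have hle := Nat.card_le_card_of_surjective f hsurj
      have h6 : Nat.card (Fin s) = s := by simp
      rw [h6] at hle
      exact hle
    have hne : S.Nonempty := by
      by_contra hne
      rw [Set.not_nonempty_iff_eq_empty] at hne
      rw [hfoldeq, hne, csSup_empty] at h2
      rw [Nat.bot_eq_zero] at h2
      omega
    have hmem := Nat.sSup_mem hne hbdd
    obtain ⟨f, hf⟩ := hmem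
    rw [hfoldeq] at h2
    exact AuxFold.interp (Nat.card V) V G inferInstance le_rfl hG k (sSup S) f hf hcol h2
end

section
/- Let G be a finite simple graph and let G′ be the graph obtained from G by a single simple fold (identifying two vertices x and y at distance two). Then χ(G) ≤ χ(G′) ≤ χ(G) + 1, where χ denotes the chromatic number. -/
/-- A simple fold raises the chromatic number by at most one and never lowers it:
`χ(G) ≤ χ(G') ≤ χ(G) + 1`. -/
theorem chromaticNumber_le_of_simpleFold {V W : Type} [Fintype V] [Fintype W]
    (G : SimpleGraph V) (G' : SimpleGraph W) (f : V → W)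
    (h : IsSimpleFold G G' f) :
    G.chromaticNumber ≤ G'.chromaticNumber ∧
    G'.chromaticNumber ≤ G.chromaticNumber + 1 := by
  obtain ⟨hsurj, ⟨x, y, hxy, hdist, hfxy, huniq⟩, hadj⟩ := h
  constructor
  · -- pull back any coloring of G' along f
    refine SimpleGraph.chromaticNumber_le_of_forall_imp fun n ⟨C⟩ => ⟨SimpleGraph.Coloring.mk
      (fun v => C (f v)) fun {u v} huv => C.valid ((hadj _ _).mpr ⟨u, v, huv, rfl, rfl⟩)⟩
  · -- extend a coloring of G by one extra color for the folded vertex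
    have hne : G.chromaticNumber ≠ ⊤ :=
      SimpleGraph.chromaticNumber_ne_top_iff_exists.mpr ⟨_, G.colorable_of_fintype⟩
    set n := G.chromaticNumber.toNat with hn
    obtain ⟨C⟩ := G.colorable_chromaticNumber_of_fintype
    set g := Function.surjInv hsurj with hg
    have hgf : ∀ w, f (g w) = w := Function.surjInv_eq hsurj
    have key : ∀ (w : W) (u : V), w ≠ f x → f u = w → u = g w := by
      intro w u hw hu
      by_contra hne'
      rcases huniq u (g w) hne' (by rw [hu, hgf]) with ⟨h1, _⟩ | ⟨_, h2⟩
      · exact hw (by rw [← hu, h1])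
      · exact hw (by rw [← hgf w, h2, hfxy])
    classical
    have hcol : G'.Colorable (n + 1) := by
      refine ⟨SimpleGraph.Coloring.mk
        (fun w => if w = f x then Fin.last n else Fin.castSucc (C (g w))) ?_⟩
      intro a b hab
      have hAB : a ≠ b := G'.ne_of_adj hab
      obtain ⟨u, v, huv, hu, hv⟩ := (hadj a b).mp hab
      by_cases ha : a = f x <;> by_cases hb : b = f x
      · exact absurd (ha.trans hb.symm) hAB
      · simp only [if_pos ha, if_neg hb]
        exact fun hc => (Fin.castSucc_lt_last _).ne' hc
      · simp only [if_neg ha, if_pos hb]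
        exact fun hc => (Fin.castSucc_lt_last _).ne hc
      · simp only [if_neg ha, if_neg hb]
        have h1 := key a u ha hu
        have h2 := key b v hb hv
        intro hc
        exact C.valid huv (by rw [h1, h2]; exact Fin.castSucc_injective _ hc)
    calc G'.chromaticNumber ≤ ((n + 1 : ℕ) : ℕ∞) := hcol.chromaticNumber_le
      _ = G.chromaticNumber + 1 := by
          rw [Nat.cast_add, Nat.cast_one, hn, ENat.coe_toNat hne]
end

section
/- If the finite simple graph G is the join of two graphs G₁ and G₂, then the achromatic number of G equals the sum of the achromatic numbers of G₁ and G₂: Ψ(G) = Ψ(G₁) + Ψ(G₂). -/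
/-- Every finite graph admits a complete coloring. -/
lemma exists_complete_coloring {V : Type} [Fintype V] (G : SimpleGraph V) :
    ∃ s : ℕ, ∃ c : V → Fin s, IsCompleteColoring G c := by
  classical
  have hT : ∃ s : ℕ, ∃ c : V → Fin s,
      (∀ u v : V, G.Adj u v → c u ≠ c v) ∧ Function.Surjective c := by
    refine ⟨Fintype.card V, Fintype.equivFin V, ?_, (Fintype.equivFin V).surjective⟩
    intro u v h hc
    exact G.ne_of_adj h ((Fintype.equivFin V).injective hc)
  obtain ⟨c, hp, hs⟩ := Nat.find_spec hT
  refine ⟨Nat.find hT, c, hp, hs, ?_⟩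
  by_contra hnc
  push_neg at hnc
  obtain ⟨a, b, hab, hno⟩ := hnc
  have hcard : Fintype.card {x : Fin (Nat.find hT) // x ≠ b} = Nat.find hT - 1 := by
    simp [Fintype.card_subtype_compl]
  let e : {x : Fin (Nat.find hT) // x ≠ b} ≃ Fin (Nat.find hT - 1) :=
    Fintype.equivFinOfCardEq hcard
  let c' : V → Fin (Nat.find hT - 1) :=
    fun v => e (if h : c v = b then ⟨a, hab⟩ else ⟨c v, h⟩)
  have hp' : ∀ u v : V, G.Adj u v → c' u ≠ c' v := by
    intro u v hadj heq
    have h2 := congrArg Subtype.val (e.injective heq)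
    by_cases h1 : c u = b <;> by_cases h3 : c v = b <;> simp [h1, h3] at h2
    · exact hp u v hadj (h1.trans h3.symm)
    · exact hno v u hadj.symm h2.symm h1
    · exact hno u v hadj h2 h3
    · exact hp u v hadj h2
  have hs' : Function.Surjective c' := by
    intro j
    obtain ⟨v, hv⟩ := hs (e.symm j).1
    refine ⟨v, ?_⟩
    have hne : c v ≠ b := by rw [hv]; exact (e.symm j).2
    simp only [c', dif_neg hne]
    have h4 : (⟨c v, hne⟩ : {x : Fin (Nat.find hT) // x ≠ b}) = e.symm j := Subtype.ext hv
    simp only [h4, Equiv.apply_symm_apply]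
  have hlt : Nat.find hT - 1 < Nat.find hT := Nat.sub_lt (Fin.pos a) one_pos
  exact Nat.find_min hT hlt ⟨c', hp', hs'⟩

lemma achSet_bddAbove {V : Type} [Fintype V] (G : SimpleGraph V) :
    BddAbove {s : ℕ | ∃ c : V → Fin s, IsCompleteColoring G c} := by
  refine ⟨Fintype.card V, ?_⟩
  rintro s ⟨c, _, hsurj, _⟩
  simpa using Fintype.card_le_of_surjective c hsurj

/-- The join of two graphs: all edges of `G₁`, all edges of `G₂`, and all edges
between the two vertex sets. -/
def graphJoin {V₁ V₂ : Type} (G₁ : SimpleGraph V₁) (G₂ : SimpleGraph V₂) :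
    SimpleGraph (V₁ ⊕ V₂) where
  Adj a b :=
    (∃ u v, a = Sum.inl u ∧ b = Sum.inl v ∧ G₁.Adj u v) ∨
    (∃ u v, a = Sum.inr u ∧ b = Sum.inr v ∧ G₂.Adj u v) ∨
    (∃ u v, a = Sum.inl u ∧ b = Sum.inr v) ∨
    (∃ u v, a = Sum.inr u ∧ b = Sum.inl v)
  symm := ⟨by
    rintro a b (⟨u, v, rfl, rfl, h⟩ | ⟨u, v, rfl, rfl, h⟩ | ⟨u, v, rfl, rfl⟩ | ⟨u, v, rfl, rfl⟩)
    · exact Or.inl ⟨v, u, rfl, rfl, h.symm⟩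
    · exact Or.inr (Or.inl ⟨v, u, rfl, rfl, h.symm⟩)
    · exact Or.inr (Or.inr (Or.inr ⟨v, u, rfl, rfl⟩))
    · exact Or.inr (Or.inr (Or.inl ⟨v, u, rfl, rfl⟩))⟩
  loopless := ⟨by
    rintro a (⟨u, v, rfl, h2, h⟩ | ⟨u, v, rfl, h2, h⟩ | ⟨u, v, rfl, h2⟩ | ⟨u, v, rfl, h2⟩) <;>
      simp_all⟩


section JoinLemmas

variable {V₁ V₂ : Type} {G₁ : SimpleGraph V₁} {G₂ : SimpleGraph V₂}

lemma join_adj_inl_inl {u v : V₁} :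
    (graphJoin G₁ G₂).Adj (Sum.inl u) (Sum.inl v) ↔ G₁.Adj u v := by
  constructor
  · rintro (⟨x, y, hx, hy, h⟩ | ⟨x, y, hx, hy, h⟩ | ⟨x, y, hx, hy⟩ | ⟨x, y, hx, hy⟩) <;>
      simp_all
  · exact fun h => Or.inl ⟨u, v, rfl, rfl, h⟩

lemma join_adj_inr_inr {u v : V₂} :
    (graphJoin G₁ G₂).Adj (Sum.inr u) (Sum.inr v) ↔ G₂.Adj u v := by
  constructor
  · rintro (⟨x, y, hx, hy, h⟩ | ⟨x, y, hx, hy, h⟩ | ⟨x, y, hx, hy⟩ | ⟨x, y, hx, hy⟩) <;>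
      simp_all
  · exact fun h => Or.inr (Or.inl ⟨u, v, rfl, rfl, h⟩)

lemma join_adj_inl_inr {u : V₁} {v : V₂} :
    (graphJoin G₁ G₂).Adj (Sum.inl u) (Sum.inr v) :=
  Or.inr (Or.inr (Or.inl ⟨u, v, rfl, rfl⟩))

lemma join_adj_inr_inl {u : V₂} {v : V₁} :
    (graphJoin G₁ G₂).Adj (Sum.inr u) (Sum.inl v) :=
  Or.inr (Or.inr (Or.inr ⟨u, v, rfl, rfl⟩))

/-- Splitting a complete coloring of a join into complete colorings of the parts. -/
lemma split_complete_coloring {s : ℕ} (c : V₁ ⊕ V₂ → Fin s)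
    (h : IsCompleteColoring (graphJoin G₁ G₂) c) :
    ∃ s₁ s₂ : ℕ, s₁ + s₂ = s ∧ (∃ c₁ : V₁ → Fin s₁, IsCompleteColoring G₁ c₁) ∧
      (∃ c₂ : V₂ → Fin s₂, IsCompleteColoring G₂ c₂) := by
  classical
  obtain ⟨hp, hs, hc⟩ := h
  set p : Fin s → Prop := fun a => ∃ u : V₁, c (Sum.inl u) = a with hpdef
  set A : Finset (Fin s) := Finset.univ.filter p with hA
  set B : Finset (Fin s) := Finset.univ.filter (fun a => ¬ p a) with hB
  have hBiff : ∀ a : Fin s, ¬ p a ↔ ∃ v : V₂, c (Sum.inr v) = a := by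
    intro a
    constructor
    · intro hnp
      obtain ⟨w, hw⟩ := hs a
      cases w with
      | inl u => exact absurd ⟨u, hw⟩ hnp
      | inr v => exact ⟨v, hw⟩
    · rintro ⟨v, hv⟩ ⟨u, hu⟩
      exact hp _ _ join_adj_inl_inr (hu.trans hv.symm)
  have hAB : A.card + B.card = s := by
    have := Finset.card_filter_add_card_filter_not
      (s := (Finset.univ : Finset (Fin s))) (p := p)
    simpa using this
  refine ⟨A.card, B.card, hAB, ?_, ?_⟩
  · -- complete coloring of G₁
    have hmem : ∀ u : V₁, c (Sum.inl u) ∈ A := by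
      intro u; simp only [hA, Finset.mem_filter, Finset.mem_univ, true_and]
      exact ⟨u, rfl⟩
    let e := A.equivFin
    refine ⟨fun u => e ⟨c (Sum.inl u), hmem u⟩, ?_, ?_, ?_⟩
    · intro u v hadj heq
      exact hp _ _ (join_adj_inl_inl.mpr hadj)
        (congrArg Subtype.val (e.injective heq))
    · intro j
      have hx : p ((e.symm j).1 : Fin _) := by
        have := (e.symm j).2
        simpa only [hA, Finset.mem_filter, Finset.mem_univ, true_and] using this
      obtain ⟨u, hu⟩ := hx
      refine ⟨u, ?_⟩
      have h4 : (⟨c (Sum.inl u), hmem u⟩ : {x // x ∈ A}) = e.symm j := Subtype.ext hu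
      show e ⟨c (Sum.inl u), hmem u⟩ = j
      simp only [h4, Equiv.apply_symm_apply]
    · intro i j hij
      have hxy : ((e.symm i).1 : Fin s) ≠ (e.symm j).1 := by
        intro hcontra
        exact hij (by
          have : e.symm i = e.symm j := Subtype.ext hcontra
          simpa using congrArg e this)
      obtain ⟨w₁, w₂, hadj, hw₁, hw₂⟩ := hc _ _ hxy
      have hPi : p ((e.symm i).1 : Fin s) := by
        have := (e.symm i).2
        simpa only [hA, Finset.mem_filter, Finset.mem_univ, true_and] using this
      have hPj : p ((e.symm j).1 : Fin s) := by
        have := (e.symm j).2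
        simpa only [hA, Finset.mem_filter, Finset.mem_univ, true_and] using this
      obtain ⟨u₁, rfl⟩ : ∃ u₁ : V₁, Sum.inl u₁ = w₁ := by
        cases w₁ with
        | inl u => exact ⟨u, rfl⟩
        | inr v => exact absurd hPi ((hBiff _).mpr ⟨v, hw₁⟩)
      obtain ⟨u₂, rfl⟩ : ∃ u₂ : V₁, Sum.inl u₂ = w₂ := by
        cases w₂ with
        | inl u => exact ⟨u, rfl⟩
        | inr v => exact absurd hPj ((hBiff _).mpr ⟨v, hw₂⟩)
      refine ⟨u₁, u₂, join_adj_inl_inl.mp hadj, ?_, ?_⟩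
      · have h4 : (⟨c (Sum.inl u₁), hmem u₁⟩ : {x // x ∈ A}) = e.symm i :=
          Subtype.ext hw₁
        simp only [h4, Equiv.apply_symm_apply]
      · have h4 : (⟨c (Sum.inl u₂), hmem u₂⟩ : {x // x ∈ A}) = e.symm j :=
          Subtype.ext hw₂
        simp only [h4, Equiv.apply_symm_apply]
  · -- complete coloring of G₂
    have hmem : ∀ v : V₂, c (Sum.inr v) ∈ B := by
      intro v; simp only [hB, Finset.mem_filter, Finset.mem_univ, true_and]
      exact (hBiff _).mpr ⟨v, rfl⟩
    let e := B.equivFin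
    refine ⟨fun v => e ⟨c (Sum.inr v), hmem v⟩, ?_, ?_, ?_⟩
    · intro u v hadj heq
      exact hp _ _ (join_adj_inr_inr.mpr hadj)
        (congrArg Subtype.val (e.injective heq))
    · intro j
      have hx : ¬ p ((e.symm j).1 : Fin _) := by
        have := (e.symm j).2
        simpa only [hB, Finset.mem_filter, Finset.mem_univ, true_and] using this
      obtain ⟨v, hv⟩ := (hBiff _).mp hx
      refine ⟨v, ?_⟩
      have h4 : (⟨c (Sum.inr v), hmem v⟩ : {x // x ∈ B}) = e.symm j := Subtype.ext hv
      show e ⟨c (Sum.inr v), hmem v⟩ = j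
      simp only [h4, Equiv.apply_symm_apply]
    · intro i j hij
      have hxy : ((e.symm i).1 : Fin s) ≠ (e.symm j).1 := by
        intro hcontra
        exact hij (by
          have : e.symm i = e.symm j := Subtype.ext hcontra
          simpa using congrArg e this)
      obtain ⟨w₁, w₂, hadj, hw₁, hw₂⟩ := hc _ _ hxy
      have hPi : ¬ p ((e.symm i).1 : Fin s) := by
        have := (e.symm i).2
        simpa only [hB, Finset.mem_filter, Finset.mem_univ, true_and] using this
      have hPj : ¬ p ((e.symm j).1 : Fin s) := by
        have := (e.symm j).2
        simpa only [hB, Finset.mem_filter, Finset.mem_univ, true_and] using this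
      obtain ⟨v₁, rfl⟩ : ∃ v₁ : V₂, Sum.inr v₁ = w₁ := by
        cases w₁ with
        | inl u => exact absurd ⟨u, hw₁⟩ hPi
        | inr v => exact ⟨v, rfl⟩
      obtain ⟨v₂, rfl⟩ : ∃ v₂ : V₂, Sum.inr v₂ = w₂ := by
        cases w₂ with
        | inl u => exact absurd ⟨u, hw₂⟩ hPj
        | inr v => exact ⟨v, rfl⟩
      refine ⟨v₁, v₂, join_adj_inr_inr.mp hadj, ?_, ?_⟩
      · have h4 : (⟨c (Sum.inr v₁), hmem v₁⟩ : {x // x ∈ B}) = e.symm i :=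
          Subtype.ext hw₁
        simp only [h4, Equiv.apply_symm_apply]
      · have h4 : (⟨c (Sum.inr v₂), hmem v₂⟩ : {x // x ∈ B}) = e.symm j :=
          Subtype.ext hw₂
        simp only [h4, Equiv.apply_symm_apply]

/-- Combining complete colorings of the parts into one of the join. -/
lemma combine_complete_coloring {s₁ s₂ : ℕ} (c₁ : V₁ → Fin s₁) (c₂ : V₂ → Fin s₂)
    (h₁ : IsCompleteColoring G₁ c₁) (h₂ : IsCompleteColoring G₂ c₂) :
    ∃ c : V₁ ⊕ V₂ → Fin (s₁ + s₂), IsCompleteColoring (graphJoin G₁ G₂) c := by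
  refine ⟨Sum.elim (fun u => Fin.castAdd s₂ (c₁ u)) (fun v => Fin.natAdd s₁ (c₂ v)),
    ?_, ?_, ?_⟩
  · rintro a b (⟨u, v, rfl, rfl, h⟩ | ⟨u, v, rfl, rfl, h⟩ | ⟨u, v, rfl, rfl⟩ |
      ⟨u, v, rfl, rfl⟩) heq <;>
      simp only [Sum.elim_inl, Sum.elim_inr] at heq <;>
      have hv := congrArg Fin.val heq <;>
      simp only [Fin.coe_castAdd, Fin.coe_natAdd] at hv
    · exact h₁.1 u v h (Fin.ext hv)
    · exact h₂.1 u v h (Fin.ext (by omega))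
    · exact absurd hv (by have := (c₁ u).isLt; omega)
    · exact absurd hv (by have := (c₁ v).isLt; omega)
  · intro k
    by_cases hk : (k : ℕ) < s₁
    · obtain ⟨u, hu⟩ := h₁.2.1 ⟨k, hk⟩
      refine ⟨Sum.inl u, ?_⟩
      simp only [Sum.elim_inl, hu]
      exact Fin.ext rfl
    · obtain ⟨v, hv⟩ := h₂.2.1 ⟨(k : ℕ) - s₁, by have := k.isLt; omega⟩
      refine ⟨Sum.inr v, ?_⟩
      simp only [Sum.elim_inr, hv]
      exact Fin.ext (by simp [Fin.coe_natAdd]; omega)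
  · intro a b hab
    have havs := a.isLt
    have hbvs := b.isLt
    have hvne : (a : ℕ) ≠ (b : ℕ) := fun h => hab (Fin.ext h)
    by_cases ha : (a : ℕ) < s₁ <;> by_cases hb : (b : ℕ) < s₁
    · have hne : (⟨(a : ℕ), ha⟩ : Fin s₁) ≠ ⟨(b : ℕ), hb⟩ := by
        intro h; exact hvne (by simpa using congrArg Fin.val h)
      obtain ⟨u, v, hadj, hu, hv⟩ := h₁.2.2 _ _ hne
      refine ⟨Sum.inl u, Sum.inl v, join_adj_inl_inl.mpr hadj, ?_, ?_⟩
      · simp only [Sum.elim_inl, hu]; exact Fin.ext rfl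
      · simp only [Sum.elim_inl, hv]; exact Fin.ext rfl
    · obtain ⟨u, hu⟩ := h₁.2.1 ⟨(a : ℕ), ha⟩
      obtain ⟨v, hv⟩ := h₂.2.1 ⟨(b : ℕ) - s₁, by omega⟩
      refine ⟨Sum.inl u, Sum.inr v, join_adj_inl_inr, ?_, ?_⟩
      · simp only [Sum.elim_inl, hu]; exact Fin.ext rfl
      · simp only [Sum.elim_inr, hv]; exact Fin.ext (by simp [Fin.coe_natAdd]; omega)
    · obtain ⟨u, hu⟩ := h₂.2.1 ⟨(a : ℕ) - s₁, by omega⟩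
      obtain ⟨v, hv⟩ := h₁.2.1 ⟨(b : ℕ), hb⟩
      refine ⟨Sum.inr u, Sum.inl v, join_adj_inr_inl, ?_, ?_⟩
      · simp only [Sum.elim_inr, hu]; exact Fin.ext (by simp [Fin.coe_natAdd]; omega)
      · simp only [Sum.elim_inl, hv]; exact Fin.ext rfl
    · have hne : (⟨(a : ℕ) - s₁, by omega⟩ : Fin s₂) ≠ ⟨(b : ℕ) - s₁, by omega⟩ := by
        intro h
        have := congrArg Fin.val h
        simp only at this
        exact hvne (by omega)
      obtain ⟨u, v, hadj, hu, hv⟩ := h₂.2.2 _ _ hne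
      refine ⟨Sum.inr u, Sum.inr v, join_adj_inr_inr.mpr hadj, ?_, ?_⟩
      · simp only [Sum.elim_inr, hu]; exact Fin.ext (by simp [Fin.coe_natAdd]; omega)
      · simp only [Sum.elim_inr, hv]; exact Fin.ext (by simp [Fin.coe_natAdd]; omega)

end JoinLemmas

/-- Harary–Hedetniemi: the achromatic number of a join is the sum of the
achromatic numbers: `Ψ(G₁ + G₂) = Ψ(G₁) + Ψ(G₂)`. -/
theorem achromaticNumber_graphJoin {V₁ V₂ : Type} [Fintype V₁] [Fintype V₂]
    (G₁ : SimpleGraph V₁) (G₂ : SimpleGraph V₂) :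
    achromaticNumber (graphJoin G₁ G₂) = achromaticNumber G₁ + achromaticNumber G₂ := by
  classical
  have h1ne : {s : ℕ | ∃ c : V₁ → Fin s, IsCompleteColoring G₁ c}.Nonempty := by
    obtain ⟨s, c, hc⟩ := exists_complete_coloring G₁; exact ⟨s, c, hc⟩
  have h2ne : {s : ℕ | ∃ c : V₂ → Fin s, IsCompleteColoring G₂ c}.Nonempty := by
    obtain ⟨s, c, hc⟩ := exists_complete_coloring G₂; exact ⟨s, c, hc⟩
  have hJne : {s : ℕ | ∃ c : V₁ ⊕ V₂ → Fin s,
      IsCompleteColoring (graphJoin G₁ G₂) c}.Nonempty := by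
    obtain ⟨s, c, hc⟩ := exists_complete_coloring (graphJoin G₁ G₂); exact ⟨s, c, hc⟩
  apply le_antisymm
  · apply csSup_le hJne
    rintro s ⟨c, hc⟩
    obtain ⟨s₁, s₂, hsum, ⟨c₁, hc₁⟩, ⟨c₂, hc₂⟩⟩ := split_complete_coloring c hc
    have hs₁ : s₁ ≤ achromaticNumber G₁ :=
      le_csSup (achSet_bddAbove G₁) ⟨c₁, hc₁⟩
    have hs₂ : s₂ ≤ achromaticNumber G₂ :=
      le_csSup (achSet_bddAbove G₂) ⟨c₂, hc₂⟩
    omega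
  · obtain ⟨c₁, hc₁⟩ : achromaticNumber G₁ ∈
        {s : ℕ | ∃ c : V₁ → Fin s, IsCompleteColoring G₁ c} :=
      Nat.sSup_mem h1ne (achSet_bddAbove G₁)
    obtain ⟨c₂, hc₂⟩ : achromaticNumber G₂ ∈
        {s : ℕ | ∃ c : V₂ → Fin s, IsCompleteColoring G₂ c} :=
      Nat.sSup_mem h2ne (achSet_bddAbove G₂)
    obtain ⟨c, hc⟩ := combine_complete_coloring c₁ c₂ hc₁ hc₂
    exact le_csSup (achSet_bddAbove (graphJoin G₁ G₂)) ⟨c, hc⟩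
end

section
/- Let n ≥ 3 and let Ψ be the achromatic number of the cycle Cₙ on n vertices. Then n ≥ Ψ(Ψ − 1)/2 if Ψ is odd, and n ≥ Ψ²/2 if Ψ is even. -/
open Finset in
lemma class_bound {n s : ℕ} (hn : 3 ≤ n) (c : Fin n → Fin s)
    (h : IsCompleteColoring (SimpleGraph.cycleGraph n) c) (a : Fin s) :
    s - 1 ≤ 2 * #{v : Fin n | c v = a} := by
  classical
  obtain ⟨m, rfl⟩ : ∃ m, n = m + 3 := ⟨n - 3, by omega⟩
  obtain ⟨hprop, hsurj, hcomp⟩ := h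
  set T : Finset (Fin s) := {b | b ≠ a} with hT
  have hTcard : #T = s - 1 := by
    have : T = univ.erase a := by ext b; simp [hT, Finset.mem_erase]
    rw [this, Finset.card_erase_of_mem (mem_univ a), Finset.card_univ, Fintype.card_fin]
  have key : ∀ b ∈ T, ∃ u v : Fin (m+3),
      (SimpleGraph.cycleGraph (m+3)).Adj u v ∧ c u = a ∧ c v = b := by
    intro b hb
    have hb' : a ≠ b := fun e => by simp [hT, e.symm] at hb
    exact hcomp a b hb'
  choose! u v hadj hcu hcv using key
  rw [← hTcard]
  apply Finset.card_le_mul_card_image_of_maps_to (f := u)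
    (t := ({w : Fin (m+3) | c w = a} : Finset (Fin (m+3))))
  · intro b hb
    simp only [Finset.mem_filter, Finset.mem_univ, true_and]
    exact hcu b hb
  · intro w hw
    have hdeg : (SimpleGraph.cycleGraph (m+3)).degree w = 2 :=
      SimpleGraph.cycleGraph_degree_three_le
    rw [← hdeg, SimpleGraph.degree]
    apply Finset.card_le_card_of_injOn (fun b => v b)
    · intro b hb
      simp only [Finset.mem_coe, Finset.coe_filter, Set.mem_setOf_eq, Finset.mem_filter] at hb ⊢
      rw [SimpleGraph.mem_neighborFinset, ← hb.2]
      exact hadj b hb.1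
    · intro b hb b' hb' he
      simp only [Finset.coe_filter, Set.mem_setOf_eq] at hb hb'
      have hc : c (v b) = c (v b') := by simpa using congrArg c he
      rw [hcv b hb.1, hcv b' hb'.1] at hc
      exact hc

open Finset in
lemma total_bound {n s : ℕ} (hn : 3 ≤ n) (c : Fin n → Fin s)
    (h : IsCompleteColoring (SimpleGraph.cycleGraph n) c) :
    s * (s - 1) ≤ 2 * n ∧ (Even s → s * s ≤ 2 * n) := by
  classical
  have hfib : ∑ a : Fin s, #{v : Fin n | c v = a} = n := by
    simpa using (Finset.card_eq_sum_card_fiberwise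
      (f := c) (s := Finset.univ) (t := Finset.univ) (by simp)).symm
  constructor
  · calc s * (s - 1) = ∑ _a : Fin s, (s - 1) := by simp [mul_comm]
      _ ≤ ∑ a : Fin s, 2 * #{v : Fin n | c v = a} :=
          Finset.sum_le_sum fun a _ => class_bound hn c h a
      _ = 2 * ∑ a : Fin s, #{v : Fin n | c v = a} := (Finset.mul_sum ..).symm
      _ = 2 * n := by rw [hfib]
  · intro hev
    calc s * s = ∑ _a : Fin s, s := by simp [mul_comm]
      _ ≤ ∑ a : Fin s, 2 * #{v : Fin n | c v = a} := by
          apply Finset.sum_le_sum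
          intro a _
          have h1 := class_bound hn c h a
          have hs : s ≠ 0 := by
            rintro rfl
            exact (c ⟨0, by omega⟩).elim0
          have hne : s - 1 ≠ 2 * #{v : Fin n | c v = a} := by
            intro he
            have hodd : Odd (s - 1) := by
              rcases hev with ⟨k, hk⟩
              exact ⟨k - 1, by omega⟩
            rw [he] at hodd
            exact (Nat.not_odd_iff_even.mpr (even_two_mul _)) hodd
          omega
      _ = 2 * ∑ a : Fin s, #{v : Fin n | c v = a} := (Finset.mul_sum ..).symm
      _ = 2 * n := by rw [hfib]

/-- Marcu's bound: if `Ψ` is the achromatic number of the cycle `Cₙ` (`n ≥ 3`),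
then `n ≥ Ψ(Ψ - 1)/2` when `Ψ` is odd and `n ≥ Ψ²/2` when `Ψ` is even. -/
theorem cycle_achromatic_lower_bound (n : ℕ) (hn : 3 ≤ n) (Ψ : ℕ)
    (hΨ : achromaticNumber (SimpleGraph.cycleGraph n) = Ψ) :
    (Odd Ψ → Ψ * (Ψ - 1) / 2 ≤ n) ∧ (Even Ψ → Ψ ^ 2 / 2 ≤ n) := by
  subst hΨ
  set S := {s : ℕ | ∃ c : Fin n → Fin s, IsCompleteColoring (SimpleGraph.cycleGraph n) c}
    with hS
  by_cases hne : S.Nonempty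
  · have hbdd : BddAbove S := by
      refine ⟨2 * n + 1, fun s hs => ?_⟩
      obtain ⟨c, hc⟩ := hs
      have := (total_bound hn c hc).1
      rcases s with _ | t
      · omega
      · have ht : (t + 1) * t ≤ 2 * n := by simpa using this
        nlinarith
    have hmem : sSup S ∈ S := Nat.sSup_mem hne hbdd
    obtain ⟨c, hc⟩ := hmem
    obtain ⟨h1, h2⟩ := total_bound hn c hc
    set Ψ := sSup S
    constructor
    · intro _
      calc Ψ * (Ψ - 1) / 2 ≤ (2 * n) / 2 := Nat.div_le_div_right h1
        _ = n := by omega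
    · intro hev
      have : Ψ ^ 2 = Ψ * Ψ := sq Ψ
      calc Ψ ^ 2 / 2 = Ψ * Ψ / 2 := by rw [this]
        _ ≤ (2 * n) / 2 := Nat.div_le_div_right (h2 hev)
        _ = n := by omega
  · have : S = ∅ := Set.not_nonempty_iff_eq_empty.mp hne
    rw [achromaticNumber]
    rw [hS] at this
    rw [this, csSup_empty]
    simp only [Nat.bot_eq_zero]
    exact ⟨fun h => absurd h (by decide), fun _ => by simp⟩
end
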